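/- arXiv:2507.18474 — 2 statements merged into one kernel-verified Lean document; each statement's English description precedes it below -/
import Mathlib

section
/- Let γ ≥ 2. There exists a constant c > 0 depending only on γ and n such that for all z, z' ∈ ℝⁿ: |V_γ(z) − V_γ(z')|² ≤ c ⟨|z|^{γ-2} z − |z'|^{γ-2} z', z − z'⟩, where V_γ(z) = |z|^{(γ-2)/2} z and ⟨·,·⟩ is the Euclidean inner product. -/
private lemma scalarS {p a b : ℝ} (hp : 0 ≤ p) (hb : 0 ≤ b) (hba : b ≤ a) :
    (a ^ p - b ^ p) * a ≤ (p + 1) * a ^ p * (a - b) := by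
  rcases eq_or_lt_of_le (hb.trans hba) with ha0 | ha
  · have hb0 : b = 0 := le_antisymm (hba.trans ha0.symm.le) hb
    simp [← ha0, hb0]
  · have hs0 : 0 ≤ b / a := div_nonneg hb ha.le
    have hs1 : b / a ≤ 1 := (div_le_one ha).mpr hba
    have hbs : b = (b / a) * a := by field_simp
    have hbp : b ^ p = (b / a) ^ p * a ^ p := by
      rw [← Real.mul_rpow hs0 ha.le, div_mul_cancel₀ _ ha.ne']
    have hap : 0 ≤ a ^ p := Real.rpow_nonneg ha.le p
    rcases le_total p 1 with hp1 | hp1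
    · have hsp : b / a ≤ (b / a) ^ p := by
        rcases eq_or_lt_of_le hs0 with h0 | h0
        · rw [← h0]; exact Real.rpow_nonneg le_rfl p
        · calc b / a = (b / a) ^ (1 : ℝ) := (Real.rpow_one _).symm
            _ ≤ (b / a) ^ p := Real.rpow_le_rpow_of_exponent_ge h0 hs1 hp1
      rw [hbp]
      nth_rewrite 2 [hbs]
      nlinarith [mul_nonneg (mul_nonneg hap ha.le) (sub_nonneg.mpr hsp),
        mul_nonneg (mul_nonneg hap ha.le) (mul_nonneg hp (sub_nonneg.mpr hs1))]
    · have hsp : 1 + p * (b / a - 1) ≤ (b / a) ^ p := by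
        have h := one_add_mul_self_le_rpow_one_add (by linarith : (-1:ℝ) ≤ b / a - 1) hp1
        simpa using h
      rw [hbp]
      nth_rewrite 2 [hbs]
      nlinarith [mul_nonneg (mul_nonneg hap ha.le) (sub_nonneg.mpr hsp),
        mul_nonneg (mul_nonneg hap ha.le) (sub_nonneg.mpr hs1)]

private lemma keylem {F : Type*} [NormedAddCommGroup F] [InnerProductSpace ℝ F] {p : ℝ}
    (hp : 0 ≤ p) (z z' : F) (hba : ‖z'‖ ≤ ‖z‖) :
    ‖(‖z‖ ^ p) • z - (‖z'‖ ^ p) • z'‖ ^ 2 ≤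
      4 * (p + 2) ^ 2 * (inner ℝ ((‖z‖ ^ (2 * p)) • z - (‖z'‖ ^ (2 * p)) • z') (z - z') : ℝ) := by
  set a := ‖z‖ with ha
  set b := ‖z'‖ with hb
  have ha0 : 0 ≤ a := norm_nonneg z
  have hb0 : 0 ≤ b := norm_nonneg z'
  have hA0 : 0 ≤ a ^ p := Real.rpow_nonneg ha0 p
  have hB0 : 0 ≤ b ^ p := Real.rpow_nonneg hb0 p
  have hBA : b ^ p ≤ a ^ p := Real.rpow_le_rpow hb0 hba hp
  have hA2 : a ^ (2 * p) = (a ^ p) ^ 2 := by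
    rw [mul_comm, Real.rpow_mul ha0]
    norm_num
  have hB2 : b ^ (2 * p) = (b ^ p) ^ 2 := by
    rw [mul_comm, Real.rpow_mul hb0]
    norm_num
  set A := a ^ p
  set B := b ^ p
  have hinner : (inner ℝ ((A ^ 2) • z - (B ^ 2) • z') (z - z') : ℝ)
      = A ^ 2 * a ^ 2 - (A ^ 2 + B ^ 2) * (inner ℝ z z' : ℝ) + B ^ 2 * b ^ 2 := by
    simp only [inner_sub_left, inner_sub_right, real_inner_smul_left,
      real_inner_self_eq_norm_sq, real_inner_comm z' z]
    ring
  have hns : ‖z - z'‖ ^ 2 = a ^ 2 - 2 * (inner ℝ z z' : ℝ) + b ^ 2 := by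
    rw [@norm_sub_sq_real]
  have hstepA : (A ^ 2 + B ^ 2) / 2 * ‖z - z'‖ ^ 2
      ≤ (inner ℝ ((A ^ 2) • z - (B ^ 2) • z') (z - z') : ℝ) := by
    rw [hinner, hns]
    nlinarith [mul_nonneg (sub_nonneg.mpr (pow_le_pow_left₀ hB0 hBA 2))
      (sub_nonneg.mpr (pow_le_pow_left₀ hb0 hba 2))]
  have hsub : a - b ≤ ‖z - z'‖ := by
    have h := abs_norm_sub_norm_le z z'
    calc a - b ≤ |a - b| := le_abs_self _
      _ ≤ ‖z - z'‖ := h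
  have hnd : 0 ≤ ‖z - z'‖ := norm_nonneg _
  have hscal : (A - B) * a ≤ (p + 1) * A * (a - b) := scalarS hp hb0 hba
  have hnorm : ‖A • z - B • z'‖ ≤ (p + 2) * (A + B) * ‖z - z'‖ := by
    have split : A • z - B • z' = B • (z - z') + (A - B) • z := by module
    calc ‖A • z - B • z'‖ = ‖B • (z - z') + (A - B) • z‖ := by rw [split]
      _ ≤ ‖B • (z - z')‖ + ‖(A - B) • z‖ := norm_add_le _ _
      _ = B * ‖z - z'‖ + (A - B) * a := by
          rw [norm_smul, norm_smul, Real.norm_of_nonneg hB0,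
            Real.norm_of_nonneg (sub_nonneg.mpr hBA), ← ha]
      _ ≤ (p + 2) * (A + B) * ‖z - z'‖ := by
          nlinarith [mul_le_mul_of_nonneg_left hsub (by positivity : (0:ℝ) ≤ (p + 1) * A),
            mul_nonneg hB0 hnd, mul_nonneg (mul_nonneg hp hB0) hnd,
            mul_nonneg (mul_nonneg hp hA0) hnd, mul_nonneg hA0 hnd]
  rw [hA2, hB2]
  have hsq : ‖A • z - B • z'‖ ^ 2 ≤ ((p + 2) * (A + B) * ‖z - z'‖) ^ 2 :=
    pow_le_pow_left₀ (norm_nonneg _) hnorm 2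
  nlinarith [mul_le_mul_of_nonneg_left hstepA (by positivity : (0:ℝ) ≤ 4 * (p + 2) ^ 2),
    mul_nonneg (mul_nonneg (sq_nonneg (p + 2)) (sq_nonneg (A - B))) (sq_nonneg ‖z - z'‖)]

theorem V_monotonicity (n : ℕ) (γ : ℝ) (hγ : 2 ≤ γ) :
    ∃ c : ℝ, 0 < c ∧
      ∀ z z' : EuclideanSpace ℝ (Fin n),
        ‖(‖z‖ ^ ((γ - 2) / 2)) • z - (‖z'‖ ^ ((γ - 2) / 2)) • z'‖ ^ 2 ≤
          c * (inner ℝ ((‖z‖ ^ (γ - 2)) • z - (‖z'‖ ^ (γ - 2)) • z') (z - z') : ℝ) := by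
  refine ⟨(γ + 2) ^ 2, by positivity, fun z z' => ?_⟩
  have hp : 0 ≤ (γ - 2) / 2 := by linarith
  have e1 : 2 * ((γ - 2) / 2) = γ - 2 := by ring
  have e2 : 4 * ((γ - 2) / 2 + 2) ^ 2 = (γ + 2) ^ 2 := by ring
  rcases le_total ‖z'‖ ‖z‖ with h | h
  · have key := keylem hp z z' h
    rw [e1, e2] at key
    exact key
  · have key := keylem hp z' z h
    rw [e1, e2] at key
    have h1 : ‖(‖z'‖ ^ ((γ - 2) / 2)) • z' - (‖z‖ ^ ((γ - 2) / 2)) • z‖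
        = ‖(‖z‖ ^ ((γ - 2) / 2)) • z - (‖z'‖ ^ ((γ - 2) / 2)) • z'‖ := norm_sub_rev _ _
    have h2 : (inner ℝ ((‖z'‖ ^ (γ - 2)) • z' - (‖z‖ ^ (γ - 2)) • z) (z' - z) : ℝ)
        = inner ℝ ((‖z‖ ^ (γ - 2)) • z - (‖z'‖ ^ (γ - 2)) • z') (z - z') := by
      rw [← neg_sub ((‖z‖ ^ (γ - 2)) • z), ← neg_sub z z', inner_neg_neg]
    rw [h1, h2] at key
    exact key
end

section
/- Let θ ∈ [0,1), C > 0 and let (Y_j)_{j≥1} be a sequence of nonnegative reals satisfying Y_{j+1} ≤ D^j (Y_j + 1)^{e_j} for all j ≥ 1, where D ≥ 1 and e_j = (γ_j/γ_{j−1})(1 + κ_j) with γ_j ≥ γ₀ > 0 increasing and κ_j ≥ 0. Then for all N ≥ 1: Y_{N+1} ≤ (2D)^{∑_{j=1}^N j (γ_N/γ_j) ∏_{k=j}^N (1+κ_k)} · (Y₁ + 1)^{(γ_N/γ₀) ∏_{j=1}^N (1+κ_j)}. -/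
open Finset

theorem moser_iteration_bound (θ C D : ℝ) (hθ0 : 0 ≤ θ) (hθ1 : θ < 1)
    (hC : 0 < C) (hD : 1 ≤ D)
    (Y γ κ : ℕ → ℝ)
    (hY : ∀ j, 0 ≤ Y j) (hγ0 : 0 < γ 0) (hγmono : Monotone γ)
    (hκ : ∀ j, 0 ≤ κ j)
    (hrec : ∀ j : ℕ, 1 ≤ j →
      Y (j + 1) ≤ D ^ j * (Y j + 1) ^ ((γ j / γ (j - 1)) * (1 + κ j))) :
    ∀ N : ℕ, 1 ≤ N →
      Y (N + 1) ≤
        (2 * D) ^ (∑ j ∈ Finset.Icc 1 N,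
            (j : ℝ) * (γ N / γ j) * ∏ k ∈ Finset.Icc j N, (1 + κ k)) *
          (Y 1 + 1) ^ ((γ N / γ 0) * ∏ j ∈ Finset.Icc 1 N, (1 + κ j)) := by
  have hγpos : ∀ n, 0 < γ n := fun n => lt_of_lt_of_le hγ0 (hγmono (Nat.zero_le n))
  have h2D : (1:ℝ) ≤ 2 * D := by linarith
  have h2Dpos : (0:ℝ) < 2 * D := by linarith
  have hDpos : (0:ℝ) < D := by linarith
  have hY1 : (1:ℝ) ≤ Y 1 + 1 := by linarith [hY 1]
  have hprod1 : ∀ a b : ℕ, (1:ℝ) ≤ ∏ k ∈ Finset.Icc a b, (1 + κ k) := by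
    intro a b
    calc (1:ℝ) = ∏ k ∈ Finset.Icc a b, 1 := by simp
      _ ≤ ∏ k ∈ Finset.Icc a b, (1 + κ k) :=
          Finset.prod_le_prod (fun i _ => zero_le_one) (fun i _ => by linarith [hκ i])
  have hSnn : ∀ N : ℕ, (0:ℝ) ≤ ∑ j ∈ Finset.Icc 1 N,
      (j : ℝ) * (γ N / γ j) * ∏ k ∈ Finset.Icc j N, (1 + κ k) := by
    intro N
    refine Finset.sum_nonneg fun j _ => ?_
    exact mul_nonneg (mul_nonneg (Nat.cast_nonneg j)
      (div_nonneg (hγpos N).le (hγpos j).le)) (le_trans zero_le_one (hprod1 j N))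
  have hPnn : ∀ N : ℕ, (0:ℝ) ≤ (γ N / γ 0) * ∏ j ∈ Finset.Icc 1 N, (1 + κ j) := by
    intro N
    exact mul_nonneg (div_nonneg (hγpos N).le (hγpos 0).le)
      (le_trans zero_le_one (hprod1 1 N))
  have key : ∀ N : ℕ, 1 ≤ N →
      Y (N + 1) + 1 ≤
        (2 * D) ^ (∑ j ∈ Finset.Icc 1 N,
            (j : ℝ) * (γ N / γ j) * ∏ k ∈ Finset.Icc j N, (1 + κ k)) *
          (Y 1 + 1) ^ ((γ N / γ 0) * ∏ j ∈ Finset.Icc 1 N, (1 + κ j)) := by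
    intro N hN
    induction N, hN using Nat.le_induction with
    | base =>
      have hrec1 := hrec 1 le_rfl
      simp only [Nat.sub_self] at hrec1
      have hErw : (γ 1 / γ 0) * (1 + κ 1) =
          (γ 1 / γ 0) * ∏ j ∈ Finset.Icc 1 1, (1 + κ j) := by
        simp
      have hSrw : (∑ j ∈ Finset.Icc (1:ℕ) 1,
          (j : ℝ) * (γ 1 / γ j) * ∏ k ∈ Finset.Icc j 1, (1 + κ k)) = 1 + κ 1 := by
        have h1 : γ 1 ≠ 0 := (hγpos 1).ne'
        rw [Finset.Icc_self, Finset.sum_singleton, Finset.Icc_self, Finset.prod_singleton]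
        field_simp
        simp
      rw [hSrw, ← hErw]
      have hE1 : (1:ℝ) ≤ (Y 1 + 1) ^ ((γ 1 / γ 0) * (1 + κ 1)) := by
        refine Real.one_le_rpow hY1 ?_
        exact mul_nonneg (div_nonneg (hγpos 1).le (hγpos 0).le) (by linarith [hκ 1])
      have hD1 : D ^ 1 = D := pow_one D
      -- Y 2 + 1 ≤ 2 * D * (Y 1 + 1) ^ E
      have step1 : Y (1 + 1) + 1 ≤ (2 * D) * (Y 1 + 1) ^ ((γ 1 / γ 0) * (1 + κ 1)) := by
        have : (1:ℝ) ≤ D * (Y 1 + 1) ^ ((γ 1 / γ 0) * (1 + κ 1)) := by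
          nlinarith
        rw [hD1] at hrec1
        nlinarith
      have step2 : (2 * D) ≤ (2 * D) ^ (1 + κ 1) := by
        nth_rewrite 1 [← Real.rpow_one (2 * D)]
        exact Real.rpow_le_rpow_of_exponent_le h2D (by linarith [hκ 1])
      calc Y (1 + 1) + 1 ≤ (2 * D) * (Y 1 + 1) ^ ((γ 1 / γ 0) * (1 + κ 1)) := step1
        _ ≤ (2 * D) ^ (1 + κ 1) * (Y 1 + 1) ^ ((γ 1 / γ 0) * (1 + κ 1)) := by
            nlinarith
    | succ N hN ih =>
      set E : ℝ := (γ (N + 1) / γ N) * (1 + κ (N + 1)) with hEdef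
      set S : ℝ := ∑ j ∈ Finset.Icc 1 N,
          (j : ℝ) * (γ N / γ j) * ∏ k ∈ Finset.Icc j N, (1 + κ k) with hSdef
      set P : ℝ := (γ N / γ 0) * ∏ j ∈ Finset.Icc 1 N, (1 + κ j) with hPdef
      have hγN : γ N ≠ 0 := (hγpos N).ne'
      have hγN1 : γ (N + 1) ≠ 0 := (hγpos (N + 1)).ne'
      have hE0 : 0 ≤ E :=
        mul_nonneg (div_nonneg (hγpos (N+1)).le (hγpos N).le) (by linarith [hκ (N+1)])
      -- identities for S and P
      have hSnew : (∑ j ∈ Finset.Icc 1 (N + 1),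
          (j : ℝ) * (γ (N + 1) / γ j) * ∏ k ∈ Finset.Icc j (N + 1), (1 + κ k))
          = S * E + (N + 1 : ℝ) * (1 + κ (N + 1)) := by
        rw [Finset.sum_Icc_succ_top (by omega : 1 ≤ N + 1), hSdef, Finset.sum_mul]
        congr 1
        · refine Finset.sum_congr rfl fun j hj => ?_
          have hjN : j ≤ N := (Finset.mem_Icc.mp hj).2
          rw [Finset.prod_Icc_succ_top (by omega : j ≤ N + 1), hEdef]
          have hj0 : γ j ≠ 0 := (hγpos j).ne'
          field_simp
        · have : γ (N + 1) / γ (N + 1) = 1 := div_self hγN1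
          rw [Finset.Icc_self, Finset.prod_singleton, this]
          push_cast
          ring
      have hPnew : (γ (N + 1) / γ 0) * ∏ j ∈ Finset.Icc 1 (N + 1), (1 + κ j)
          = P * E := by
        rw [Finset.prod_Icc_succ_top (by omega : 1 ≤ N + 1), hPdef, hEdef]
        field_simp
      rw [hSnew, hPnew]
      -- recursion at N + 1
      have hrecN := hrec (N + 1) (by omega)
      simp only [Nat.add_sub_cancel] at hrecN
      have hA1 : (1:ℝ) ≤ (2 * D) ^ S * (Y 1 + 1) ^ P := by
        have h1 : (1:ℝ) ≤ (2 * D) ^ S := Real.one_le_rpow h2D (hSnn N)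
        have h2 : (1:ℝ) ≤ (Y 1 + 1) ^ P := Real.one_le_rpow hY1 (hPnn N)
        exact le_trans h1 (le_mul_of_one_le_right (by linarith) h2)
      have hYpos : (0:ℝ) ≤ Y (N + 1) + 1 := by linarith [hY (N + 1)]
      have hpow : (Y (N + 1) + 1) ^ E ≤ ((2 * D) ^ S * (Y 1 + 1) ^ P) ^ E :=
        Real.rpow_le_rpow hYpos ih hE0
      have hsplit : ((2 * D) ^ S * (Y 1 + 1) ^ P) ^ E
          = (2 * D) ^ (S * E) * (Y 1 + 1) ^ (P * E) := by
        rw [Real.mul_rpow (Real.rpow_nonneg h2Dpos.le _) (Real.rpow_nonneg (by linarith) _),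
          ← Real.rpow_mul h2Dpos.le, ← Real.rpow_mul (by linarith : (0:ℝ) ≤ Y 1 + 1)]
      rw [hsplit] at hpow
      -- bound on the constant
      have hconst : 2 * D ^ (N + 1) ≤ (2 * D) ^ ((N + 1 : ℝ) * (1 + κ (N + 1))) := by
        have h1 : 2 * D ^ (N + 1) ≤ (2 * D) ^ (N + 1) := by
          rw [mul_pow]
          have h2 : (2:ℝ) ≤ 2 ^ (N + 1) := by
            calc (2:ℝ) = 2 ^ 1 := (pow_one 2).symm
            _ ≤ 2 ^ (N + 1) := pow_le_pow_right₀ one_le_two (by omega)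
          have hDp : (0:ℝ) < D ^ (N + 1) := pow_pos hDpos _
          nlinarith
        have h3 : ((2 * D) ^ (N + 1) : ℝ) = (2 * D) ^ ((N + 1 : ℕ) : ℝ) :=
          (Real.rpow_natCast _ _).symm
        have h4 : (2 * D) ^ ((N + 1 : ℕ) : ℝ) ≤ (2 * D) ^ ((N + 1 : ℝ) * (1 + κ (N + 1))) := by
          apply Real.rpow_le_rpow_of_exponent_le h2D
          have hκ1 := hκ (N + 1)
          have : ((N + 1 : ℕ) : ℝ) = (N + 1 : ℝ) := by push_cast; ring
          rw [this]
          nlinarith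
        calc 2 * D ^ (N + 1) ≤ (2 * D) ^ (N + 1) := h1
          _ = (2 * D) ^ ((N + 1 : ℕ) : ℝ) := h3
          _ ≤ (2 * D) ^ ((N + 1 : ℝ) * (1 + κ (N + 1))) := h4
      -- assemble
      have hDN : (0:ℝ) < D ^ (N + 1) := pow_pos hDpos _
      have hterm1 : (1:ℝ) ≤ D ^ (N + 1) * (Y (N + 1) + 1) ^ E := by
        have h2 : (1:ℝ) ≤ (Y (N + 1) + 1) ^ E :=
          Real.one_le_rpow (by linarith [hY (N + 1)]) hE0
        have h1 : (1:ℝ) ≤ D ^ (N + 1) := one_le_pow₀ hD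
        exact le_trans h1 (le_mul_of_one_le_right (by linarith) h2)
      have step1 : Y (N + 1 + 1) + 1 ≤ 2 * (D ^ (N + 1) * (Y (N + 1) + 1) ^ E) := by
        have := hterm1
        linarith [hrecN]
      have step2 : 2 * (D ^ (N + 1) * (Y (N + 1) + 1) ^ E)
          ≤ 2 * D ^ (N + 1) * ((2 * D) ^ (S * E) * (Y 1 + 1) ^ (P * E)) := by
        rw [mul_assoc]
        exact mul_le_mul_of_nonneg_left
          (mul_le_mul_of_nonneg_left hpow hDN.le) (by norm_num)
      have step3 : 2 * D ^ (N + 1) * ((2 * D) ^ (S * E) * (Y 1 + 1) ^ (P * E))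
          ≤ (2 * D) ^ ((N + 1 : ℝ) * (1 + κ (N + 1))) *
            ((2 * D) ^ (S * E) * (Y 1 + 1) ^ (P * E)) := by
        have h1 : (0:ℝ) ≤ (2 * D) ^ (S * E) := Real.rpow_nonneg h2Dpos.le _
        have h2 : (0:ℝ) ≤ (Y 1 + 1) ^ (P * E) := Real.rpow_nonneg (by linarith) _
        exact mul_le_mul_of_nonneg_right hconst (mul_nonneg h1 h2)
      have step4 : (2 * D) ^ ((N + 1 : ℝ) * (1 + κ (N + 1))) *
            ((2 * D) ^ (S * E) * (Y 1 + 1) ^ (P * E))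
          = (2 * D) ^ (S * E + (N + 1 : ℝ) * (1 + κ (N + 1))) * (Y 1 + 1) ^ (P * E) := by
        rw [Real.rpow_add h2Dpos]
        ring
      calc Y (N + 1 + 1) + 1 ≤ 2 * (D ^ (N + 1) * (Y (N + 1) + 1) ^ E) := step1
        _ ≤ 2 * D ^ (N + 1) * ((2 * D) ^ (S * E) * (Y 1 + 1) ^ (P * E)) := step2
        _ ≤ (2 * D) ^ ((N + 1 : ℝ) * (1 + κ (N + 1))) *
            ((2 * D) ^ (S * E) * (Y 1 + 1) ^ (P * E)) := step3
        _ = (2 * D) ^ (S * E + (N + 1 : ℝ) * (1 + κ (N + 1))) * (Y 1 + 1) ^ (P * E) :=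
            step4
  intro N hN
  linarith [key N hN]
end
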